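/- If G is a uniquely f-list colorable graph, then the sum over all vertices v of f(v) is at most n(G) + e(G), where n(G) is the number of vertices and e(G) the number of edges of G. -/

import Mathlib

/-- A coloring `c` of the vertices is proper if adjacent vertices get different colors. -/
def IsProperColoring {V α : Type*} (G : SimpleGraph V) (c : V → α) : Prop :=
  ∀ ⦃u w⦄, G.Adj u w → c u ≠ c w

/-- `c` is an `L`-coloring of `G`: a proper coloring with `c v ∈ L v` for every vertex `v`. -/
def IsListColoring {V : Type*} (G : SimpleGraph V) (L : V → Finset ℕ) (c : V → ℕ) : Prop :=
  IsProperColoring G c ∧ ∀ v, c v ∈ L v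

/-- `G` is uniquely `f`-list colorable: there is a list assignment giving each vertex `v`
a list of exactly `f v` colors, from which `G` has exactly one list coloring. -/
def UniquelyFListColorable {V : Type*} (G : SimpleGraph V) (f : V → ℕ) : Prop :=
  ∃ L : V → Finset ℕ, (∀ v, (L v).card = f v) ∧ ∃! c, IsListColoring G L c

/-- `G` is uniquely `k`-list colorable. -/
def UniquelyKListColorable {V : Type*} (G : SimpleGraph V) (k : ℕ) : Prop :=
  UniquelyFListColorable G (fun _ => k)

/-- The m-number of `G`: the least `k` for which `G` is not uniquely `k`-list colorable. -/
noncomputable def mNumber {V : Type*} (G : SimpleGraph V) : ℕ :=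
  sInf {k | ¬ UniquelyKListColorable G k}

open Finset Polynomial

lemma basis_coeff_top (s : Finset ℚ) (i : ℚ) (hi : i ∈ s) :
    (Lagrange.basis s id i).coeff (s.card - 1) = ∏ y ∈ s.erase i, (i - y)⁻¹ := by
  have hinj : Set.InjOn (id : ℚ → ℚ) s := Set.injOn_id _
  have hnd := Lagrange.natDegree_basis hinj hi
  rw [← hnd, Polynomial.coeff_natDegree, Lagrange.basis, Polynomial.leadingCoeff_prod]
  refine Finset.prod_congr rfl fun y hy => ?_
  have hne : (id i : ℚ) ≠ id y := by
    simp only [id_eq]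
    exact fun h => (Finset.mem_erase.mp hy).1 (h.symm)
  rw [Lagrange.basisDivisor, Polynomial.leadingCoeff_mul, Polynomial.leadingCoeff_C,
    leadingCoeff_X_sub_C, mul_one]
  simp

lemma dd_vanish (s : Finset ℚ) (a : ℕ) (ha : a + 1 < s.card) :
    ∑ t ∈ s, t ^ a * (∏ y ∈ s.erase t, (t - y))⁻¹ = 0 := by
  classical
  have hinj : Set.InjOn (id : ℚ → ℚ) s := Set.injOn_id _
  have hdeg : ((X : ℚ[X]) ^ a).degree < (s.card : ℕ) := by
    rw [degree_X_pow]
    exact_mod_cast Nat.lt_of_succ_lt ha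
  have h := Lagrange.eq_interpolate hinj hdeg
  have hcoeff := congrArg (fun q : ℚ[X] => q.coeff (s.card - 1)) h
  simp only [Lagrange.interpolate_apply, Polynomial.finset_sum_coeff, coeff_C_mul,
    coeff_X_pow] at hcoeff
  rw [if_neg (by omega)] at hcoeff
  rw [← Finset.sum_congr rfl (fun t ht => ?_)] at hcoeff
  · exact hcoeff.symm
  · rw [basis_coeff_top s t ht]
    simp [Finset.prod_inv_distrib]

lemma dd_vanish_nat (s : Finset ℕ) (a : ℕ) (ha : a + 1 < s.card) :
    ∑ t ∈ s, (t : ℚ) ^ a * (∏ y ∈ s.erase t, ((t : ℚ) - (y : ℚ)))⁻¹ = 0 := by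
  have hinj : Function.Injective (Nat.cast : ℕ → ℚ) := Nat.cast_injective
  have h := dd_vanish (s.image (Nat.cast : ℕ → ℚ)) a
    (by rwa [Finset.card_image_of_injective _ hinj])
  rw [Finset.sum_image (fun x _ y _ hxy => hinj hxy)] at h
  rw [← h]
  refine Finset.sum_congr rfl fun t ht => ?_
  rw [← Finset.image_erase hinj, Finset.prod_image (fun x _ y _ hxy => hinj hxy)]

/-- If `G` is uniquely `f`-list colorable, then `∑ v, f v ≤ n(G) + e(G)`. -/
theorem sum_f_le_of_UfLC
    {V : Type} [Fintype V] [DecidableEq V] (G : SimpleGraph V) [DecidableRel G.Adj]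
    (f : V → ℕ) (h : UniquelyFListColorable G f) :
    ∑ v, f v ≤ Fintype.card V + G.edgeFinset.card := by
  classical
  obtain ⟨L, hL, c, hc, huniq⟩ := h
  obtain ⟨hproper, hmem⟩ := hc
  have hf1 : ∀ v, 1 ≤ f v := fun v => by
    rw [← hL v]; exact Finset.card_pos.mpr ⟨c v, hmem v⟩
  -- the key inequality
  have key : ∑ v, (f v - 1) ≤ G.edgeFinset.card := by
    by_contra hlt
    push_neg at hlt
    set E := G.edgeFinset with hE
    -- adjacency of out-pairs of edges
    have hadj : ∀ e ∈ E, G.Adj (Quot.out e).1 (Quot.out e).2 := by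
      intro e he
      have he' : e ∈ G.edgeSet := SimpleGraph.mem_edgeFinset.mp he
      rw [← Quot.out_eq e] at he'
      exact he'
    set grid := Fintype.piFinset L with hgrid
    have hcgrid : c ∈ grid := Fintype.mem_piFinset.mpr hmem
    set wt : (V → ℕ) → ℚ :=
      fun p => ∏ v, (∏ y ∈ (L v).erase (p v), ((p v : ℚ) - (y : ℚ)))⁻¹ with hwt
    set Pf : (V → ℕ) → ℚ :=
      fun p => ∏ e ∈ E, ((p (Quot.out e).1 : ℚ) - (p (Quot.out e).2 : ℚ)) with hPf
    -- Claim 1: the big sum equals the term at c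
    have claim1 : ∑ p ∈ grid, Pf p * wt p = Pf c * wt c := by
      refine Finset.sum_eq_single_of_mem c hcgrid fun p hp hne => ?_
      have hnp : ¬ IsProperColoring G p := by
        intro hprop
        exact hne (huniq p ⟨hprop, fun v => Fintype.mem_piFinset.mp hp v⟩)
      simp only [IsProperColoring, not_forall] at hnp
      obtain ⟨u, w, huw, hpuw⟩ := hnp
      rw [not_ne_iff] at hpuw
      have hee : s(u, w) ∈ E := SimpleGraph.mem_edgeFinset.mpr ((G.mem_edgeSet).mpr huw)
      have hzero : ((p (Quot.out s(u,w)).1 : ℚ) - (p (Quot.out s(u,w)).2 : ℚ)) = 0 := by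
        have hout : s((Quot.out s(u,w)).1, (Quot.out s(u,w)).2) = s(u, w) := by
          show Quot.mk _ (Quot.out (s(u,w) : Sym2 V)) = (s(u, w) : Sym2 V)
          exact Quot.out_eq _
        rw [Sym2.eq_iff] at hout
        rcases hout with ⟨h1, h2⟩ | ⟨h1, h2⟩ <;> rw [h1, h2] <;>
          simp [hpuw]
      rw [hPf]
      simp only
      rw [Finset.prod_eq_zero hee hzero, zero_mul]
    -- Claim 2: term at c is nonzero
    have claim2 : Pf c * wt c ≠ 0 := by
      apply mul_ne_zero
      · rw [hPf]
        refine Finset.prod_ne_zero_iff.mpr fun e he => ?_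
        have := hproper (hadj e he)
        exact sub_ne_zero_of_ne (by exact_mod_cast this)
      · rw [hwt]
        refine Finset.prod_ne_zero_iff.mpr fun v _ => ?_
        refine inv_ne_zero (Finset.prod_ne_zero_iff.mpr fun y hy => ?_)
        have : y ≠ c v := (Finset.mem_erase.mp hy).1
        exact sub_ne_zero_of_ne (by exact_mod_cast this.symm)
    -- Claim 3: the big sum is zero
    have claim3 : ∑ p ∈ grid, Pf p * wt p = 0 := by
      -- expand the edge product
      have expand : ∀ p : V → ℕ, Pf p = ∑ T ∈ E.powerset,
          (-1 : ℚ) ^ ((E \ T).card) *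
            ∏ e ∈ E, (p (if e ∈ T then (Quot.out e).1 else (Quot.out e).2) : ℚ) := by
        intro p
        rw [hPf]
        simp only [sub_eq_add_neg]
        rw [Finset.prod_add]
        refine Finset.sum_congr rfl fun T hT => ?_
        have hTE : T ⊆ E := Finset.mem_powerset.mp hT
        have h1 : ∏ e ∈ T, ((p (Quot.out e).1 : ℚ)) =
            ∏ e ∈ T, (p (if e ∈ T then (Quot.out e).1 else (Quot.out e).2) : ℚ) :=
          Finset.prod_congr rfl fun e he => by rw [if_pos he]
        have h2 : ∏ e ∈ E \ T, (-(p (Quot.out e).2 : ℚ)) =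
            (-1 : ℚ) ^ ((E \ T).card) *
              ∏ e ∈ E \ T, (p (if e ∈ T then (Quot.out e).1 else (Quot.out e).2) : ℚ) := by
          rw [← Finset.prod_const, ← Finset.prod_mul_distrib]
          refine Finset.prod_congr rfl fun e he => ?_
          rw [if_neg (Finset.mem_sdiff.mp he).2, neg_one_mul]
        rw [h1, h2, ← mul_assoc, mul_comm (∏ e ∈ T, _) ((-1:ℚ)^_), mul_assoc,
          mul_comm (∏ e ∈ T, _) (∏ e ∈ E \ T, _), Finset.prod_sdiff hTE]
      -- swap sums
      calc ∑ p ∈ grid, Pf p * wt p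
          = ∑ T ∈ E.powerset, (-1 : ℚ) ^ ((E \ T).card) *
              ∑ p ∈ grid, (∏ e ∈ E,
                (p (if e ∈ T then (Quot.out e).1 else (Quot.out e).2) : ℚ)) * wt p := by
            simp_rw [expand, Finset.sum_mul, Finset.mul_sum]
            rw [Finset.sum_comm]
            exact Finset.sum_congr rfl fun T _ => Finset.sum_congr rfl fun p _ => by ring
        _ = 0 := by
            refine Finset.sum_eq_zero fun T hT => ?_
            set g : Sym2 V → V := fun e => if e ∈ T then (Quot.out e).1 else (Quot.out e).2
              with hg
            set m : V → ℕ := fun v => (E.filter (fun e => g e = v)).card with hm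
            have hsum_m : ∑ v, m v = E.card :=
              (Finset.card_eq_sum_card_fiberwise (f := g) (t := univ)
                (fun x _ => mem_univ (g x))).symm
            -- rewrite the monomial
            have mono : ∀ p : V → ℕ, p ∈ grid →
                (∏ e ∈ E, (p (g e) : ℚ)) = ∏ v, (p v : ℚ) ^ (m v) := by
              intro p _
              rw [Finset.prod_comp (fun v => (p v : ℚ)) g]
              refine Finset.prod_subset (Finset.subset_univ _) fun v _ hv => ?_
              have : (E.filter (fun e => g e = v)).card = 0 := by
                rw [Finset.card_eq_zero, Finset.filter_eq_empty_iff]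
                intro e he heq
                exact hv (Finset.mem_image.mpr ⟨e, he, heq⟩)
              rw [this, pow_zero]
            have inner : ∑ p ∈ grid, (∏ e ∈ E, (p (g e) : ℚ)) * wt p = 0 := by
              have fub : ∑ p ∈ grid, (∏ e ∈ E, (p (g e) : ℚ)) * wt p =
                  ∏ v, ∑ t ∈ L v, (t : ℚ) ^ (m v) *
                    (∏ y ∈ (L v).erase t, ((t : ℚ) - (y : ℚ)))⁻¹ := by
                rw [Finset.prod_univ_sum]
                refine Finset.sum_congr rfl fun p hp => ?_
                rw [mono p hp, hwt]
                simp only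
                rw [Finset.prod_mul_distrib]
              rw [fub]
              -- pigeonhole: some vertex has small exponent
              have : ∃ v0, m v0 + 1 < (L v0).card := by
                by_contra hall
                push_neg at hall
                have : ∑ v, (f v - 1) ≤ ∑ v, m v := by
                  refine Finset.sum_le_sum fun v _ => ?_
                  have := hall v
                  rw [hL v] at this
                  omega
                omega
              obtain ⟨v0, hv0⟩ := this
              exact Finset.prod_eq_zero (mem_univ v0) (dd_vanish_nat (L v0) (m v0) hv0)
            rw [inner, mul_zero]
    exact claim2 (claim1 ▸ claim3)
  have : ∑ v, f v = ∑ v, ((f v - 1) + 1) :=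
    Finset.sum_congr rfl fun v _ => by have := hf1 v; omega
  rw [this, Finset.sum_add_distrib, Finset.sum_const, smul_eq_mul, mul_one, ← Fintype.card,
    add_comm]
  exact Nat.add_le_add_left key _
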